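/- arXiv:math-ph/0311017 — 4 statements merged into one kernel-verified Lean document; each statement's English description precedes it below -/
import Mathlib

section
/- For a mean-field model with g : [-1,1] → ℝ bounded and convex, the thermodynamic limit of the free energy density exists: lim_{N→∞} α_N = inf_N α_N, where α_N = (1/N) log ∑_{σ∈{-1,1}^N} exp(βN g(m_N(σ))). -/
open Finset Filter

noncomputable def spin (b : Bool) : ℝ := if b then 1 else -1

noncomputable def mag (N : ℕ) (σ : Fin N → Bool) : ℝ := (∑ i, spin (σ i)) / N

noncomputable def alphaMF (β : ℝ) (g : ℝ → ℝ) (N : ℕ) : ℝ :=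
  (1 / N) * Real.log (∑ σ : Fin N → Bool, Real.exp (β * N * g (mag N σ)))

lemma spin_abs (b : Bool) : |spin b| = 1 := by cases b <;> simp [spin]

lemma mag_mem (N : ℕ) (σ : Fin N → Bool) : mag N σ ∈ Set.Icc (-1 : ℝ) 1 := by
  rw [Set.mem_Icc, ← abs_le]
  rcases Nat.eq_zero_or_pos N with h | h
  · subst h; simp [mag]
  · have hN : (0:ℝ) < N := by exact_mod_cast h
    have hs : |∑ i, spin (σ i)| ≤ N := by
      calc |∑ i, spin (σ i)| ≤ ∑ i, |spin (σ i)| := Finset.abs_sum_le_sum_abs _ _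
        _ = N := by simp [spin_abs]
    rw [mag, abs_div, abs_of_pos hN, div_le_one hN]
    exact hs

lemma mul_mag (N : ℕ) (σ : Fin N → Bool) : (N : ℝ) * mag N σ = ∑ i, spin (σ i) := by
  rcases Nat.eq_zero_or_pos N with h | h
  · subst h; simp [mag]
  · have hN : (N:ℝ) ≠ 0 := by positivity
    rw [mag, mul_div_cancel₀ _ hN]

noncomputable def Zfun (β : ℝ) (g : ℝ → ℝ) (N : ℕ) : ℝ :=
  ∑ σ : Fin N → Bool, Real.exp (β * N * g (mag N σ))

lemma Zpos (β : ℝ) (g : ℝ → ℝ) (N : ℕ) : 0 < Zfun β g N :=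
  Finset.sum_pos (fun _ _ => Real.exp_pos _) ⟨fun _ => true, Finset.mem_univ _⟩

lemma Zsub (β : ℝ) (hβ : 0 < β) (g : ℝ → ℝ)
    (hconv : ConvexOn ℝ (Set.Icc (-1 : ℝ) 1) g) (m n : ℕ) (hpos : 0 < m + n) :
    Zfun β g (m + n) ≤ Zfun β g m * Zfun β g n := by
  set e : ((Fin m → Bool) × (Fin n → Bool)) ≃ (Fin (m+n) → Bool) :=
    (Equiv.sumArrowEquivProdArrow (Fin m) (Fin n) Bool).symm.trans
      (Equiv.arrowCongr finSumFinEquiv (Equiv.refl Bool)) with he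
  have hsum : ∀ p : (Fin m → Bool) × (Fin n → Bool),
      ∑ i : Fin (m+n), spin (e p i) = (∑ i, spin (p.1 i)) + ∑ j, spin (p.2 j) := by
    intro p
    rw [← finSumFinEquiv.sum_comp (fun i => spin (e p i)), Fintype.sum_sum_type]
    congr 1 <;> apply Finset.sum_congr rfl <;> intro i _ <;> simp [he, Equiv.sumArrowEquivProdArrow]
  have hmn : (0:ℝ) < (m:ℝ) + n := by exact_mod_cast hpos
  have key : ∀ p : (Fin m → Bool) × (Fin n → Bool),
      Real.exp (β * (m+n : ℕ) * g (mag (m+n) (e p))) ≤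
        Real.exp (β * m * g (mag m p.1)) * Real.exp (β * n * g (mag n p.2)) := by
    intro p
    rw [← Real.exp_add]
    apply Real.exp_le_exp.2
    have hmag : mag (m+n) (e p) =
        ((m:ℝ)/((m:ℝ)+n)) * mag m p.1 + ((n:ℝ)/((m:ℝ)+n)) * mag n p.2 := by
      have hm := mul_mag m p.1
      have hn' := mul_mag n p.2
      rw [mag, hsum p, ← hm, ← hn', Nat.cast_add]
      field_simp
    have hab : (m:ℝ)/((m:ℝ)+n) + (n:ℝ)/((m:ℝ)+n) = 1 := by
      rw [← add_div, div_self hmn.ne']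
    have hc := hconv.2 (mag_mem m p.1) (mag_mem n p.2)
      (by positivity) (by positivity) hab
    rw [smul_eq_mul, smul_eq_mul] at hc
    rw [hmag]
    calc β * (m+n:ℕ) * g (((m:ℝ)/((m:ℝ)+n)) * mag m p.1 + ((n:ℝ)/((m:ℝ)+n)) * mag n p.2)
        ≤ β * (m+n:ℕ) * (((m:ℝ)/((m:ℝ)+n)) * g (mag m p.1) + ((n:ℝ)/((m:ℝ)+n)) * g (mag n p.2)) := by
          apply mul_le_mul_of_nonneg_left hc
          push_cast
          positivity
      _ = β * m * g (mag m p.1) + β * n * g (mag n p.2) := by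
          push_cast
          field_simp
  calc Zfun β g (m+n) = ∑ p : (Fin m → Bool) × (Fin n → Bool),
        Real.exp (β * (m+n:ℕ) * g (mag (m+n) (e p))) := by
        rw [Zfun, ← e.sum_comp (fun σ => Real.exp (β * (m+n:ℕ) * g (mag (m+n) σ)))]
    _ ≤ ∑ p : (Fin m → Bool) × (Fin n → Bool),
        Real.exp (β * m * g (mag m p.1)) * Real.exp (β * n * g (mag n p.2)) :=
        Finset.sum_le_sum (fun p _ => key p)
    _ = Zfun β g m * Zfun β g n := by
        unfold Zfun
        rw [Finset.sum_mul_sum, Fintype.sum_prod_type]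

/-- for bounded convex `g` the thermodynamic limit exists and equals the infimum. -/
theorem thermodynamic_limit_convex (β : ℝ) (hβ : 0 < β) (g : ℝ → ℝ)
    (hbdd : ∃ C, ∀ x ∈ Set.Icc (-1 : ℝ) 1, |g x| ≤ C)
    (hconv : ConvexOn ℝ (Set.Icc (-1 : ℝ) 1) g) :
    Tendsto (fun N : ℕ => alphaMF β g N) atTop
      (nhds (sInf {x : ℝ | ∃ N : ℕ, 1 ≤ N ∧ x = alphaMF β g N})) := by
  obtain ⟨C, hC⟩ := hbdd
  set u : ℕ → ℝ := fun N => Real.log (Zfun β g N) with hu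
  have hu0 : u 0 = 0 := by simp [hu, Zfun, mag]
  have halpha : ∀ N, alphaMF β g N = u N / N := fun N => by
    simp only [alphaMF, hu, Zfun, one_div_mul_eq_div]
  have hsub : Subadditive u := by
    intro m n
    rcases Nat.eq_zero_or_pos (m + n) with h0 | hpos
    · obtain ⟨hm, hn⟩ := Nat.add_eq_zero.mp h0
      subst hm; subst hn; simp [hu0]
    · have := Zsub β hβ g hconv m n hpos
      calc u (m + n) ≤ Real.log (Zfun β g m * Zfun β g n) :=
            Real.log_le_log (Zpos β g (m+n)) this
        _ = u m + u n := Real.log_mul (Zpos β g m).ne' (Zpos β g n).ne'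
  have hCnn : 0 ≤ C := le_trans (abs_nonneg _) (hC 0 (by norm_num))
  have hlb : ∀ n : ℕ, -(β * C) ≤ u n / n := by
    intro n
    rcases Nat.eq_zero_or_pos n with h | h
    · subst h; simp; positivity
    · have hN : (0:ℝ) < n := by exact_mod_cast h
      have hterm : ∀ σ : Fin n → Bool, Real.exp (β * n * (-C)) ≤ Real.exp (β * n * g (mag n σ)) := by
        intro σ
        apply Real.exp_le_exp.2
        apply mul_le_mul_of_nonneg_left _ (by positivity)
        exact neg_le_of_abs_le (hC _ (mag_mem n σ))
      have hZ : Real.exp (β * n * (-C)) ≤ Zfun β g n := by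
        calc Real.exp (β * n * (-C)) ≤ Real.exp (β * n * g (mag n (fun _ => true))) :=
              hterm _
          _ ≤ Zfun β g n := Finset.single_le_sum (f := fun σ : Fin n → Bool =>
              Real.exp (β * n * g (mag n σ))) (fun _ _ => (Real.exp_pos _).le) (Finset.mem_univ _)
      have : β * n * (-C) ≤ u n := by
        calc β * n * (-C) = Real.log (Real.exp (β * n * (-C))) := (Real.log_exp _).symm
          _ ≤ u n := Real.log_le_log (Real.exp_pos _) hZ
      rw [le_div_iff₀ hN]
      nlinarith
  have hbddb : BddBelow (Set.range fun n : ℕ => u n / n) := by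
    refine ⟨-(β * C), ?_⟩
    rintro x ⟨n, rfl⟩
    exact hlb n
  have hseteq : {x : ℝ | ∃ N : ℕ, 1 ≤ N ∧ x = alphaMF β g N} =
      (fun n : ℕ => u n / n) '' Set.Ici 1 := by
    ext x
    simp only [Set.mem_setOf_eq, Set.mem_image, Set.mem_Ici]
    constructor
    · rintro ⟨N, hN, rfl⟩; exact ⟨N, hN, (halpha N).symm⟩
    · rintro ⟨N, hN, rfl⟩; exact ⟨N, hN, (halpha N).symm⟩
  rw [hseteq]
  have := hsub.tendsto_lim hbddb
  rw [Subadditive.lim] at this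
  exact Tendsto.congr (fun N => (halpha N).symm) this
end

section
/- For every integer k ≥ 1, the generalized Curie–Weiss k-spin model with Hamiltonian H_N(σ) = -N m_N(σ)^k has a thermodynamic limit: α_N = (1/N) log ∑_{σ∈{-1,1}^N} exp(βN m_N(σ)^k) converges as N → ∞. -/
open Finset Filter

namespace CWAux

/-- functions to Bool ≃ finsets -/
def boolEquiv (N : ℕ) : (Fin N → Bool) ≃ Finset (Fin N) where
  toFun σ := univ.filter (fun i => σ i)
  invFun s := fun i => i ∈ s
  left_inv σ := by ext i; simp
  right_inv s := by ext i; simp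

lemma card_fiber (N j : ℕ) :
    (univ.filter (fun σ : Fin N → Bool =>
      (univ.filter (fun i => σ i)).card = j)).card = N.choose j := by
  rw [← Fintype.card_subtype]
  have e : {σ : Fin N → Bool // (univ.filter (fun i => σ i)).card = j}
      ≃ {s : Finset (Fin N) // s.card = j} :=
    (Equiv.subtypeEquiv (boolEquiv N) (fun σ => by simp [boolEquiv]))
  rw [Fintype.card_congr e]
  simp

lemma sum_bool_eq (N : ℕ) (g : ℕ → ℝ) :
    ∑ σ : Fin N → Bool, g ((univ.filter (fun i => σ i)).card)
      = ∑ j ∈ range (N + 1), (N.choose j : ℝ) * g j := by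
  rw [← Finset.sum_fiberwise_of_maps_to' (t := range (N + 1))
      (g := fun σ : Fin N → Bool => (univ.filter (fun i => σ i)).card)
      (fun σ _ => by
        simp only [mem_range, Nat.lt_succ_iff]
        exact (card_filter_le _ _).trans (by simp)) g]
  refine Finset.sum_congr rfl fun j _ => ?_
  rw [Finset.sum_const, card_fiber, nsmul_eq_mul]

lemma spin_sum (N : ℕ) (σ : Fin N → Bool) :
    ∑ i, spin (σ i) = 2 * ((univ.filter (fun i => σ i)).card : ℝ) - N := by
  rw [← Finset.sum_filter_add_sum_filter_not univ (fun i => σ i = true)]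
  have h1 : ∀ i ∈ univ.filter (fun i => σ i = true), spin (σ i) = 1 := by
    intro i hi; simp only [mem_filter] at hi; simp [spin, hi.2]
  have h2 : ∀ i ∈ univ.filter (fun i => ¬ σ i = true), spin (σ i) = -1 := by
    intro i hi; simp only [mem_filter] at hi; simp [spin, hi.2]
  rw [Finset.sum_congr rfl h1, Finset.sum_congr rfl h2]
  simp only [sum_const, nsmul_eq_mul, mul_one, mul_neg_one]
  have := Finset.card_filter_add_card_filter_not (s := (univ : Finset (Fin N)))
    (p := fun i => σ i = true)
  have hN : ((univ.filter (fun i => σ i = true)).card : ℝ)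
      + ((univ.filter (fun i => ¬ σ i = true)).card : ℝ) = N := by
    rw [← Nat.cast_add]
    norm_cast
    simpa using this
  linarith

noncomputable def ent (p : ℝ) : ℝ := Real.negMulLog p + Real.negMulLog (1 - p)

variable {N j : ℕ}

/-- the binomial term -/
noncomputable def bt (N j i : ℕ) : ℝ :=
  (N.choose i : ℝ) * ((j : ℝ)/N)^i * (1 - (j : ℝ)/N)^(N - i)

lemma q_nonneg (hj : j ≤ N) : (0:ℝ) ≤ 1 - (j:ℝ)/N := by
  rcases Nat.eq_zero_or_pos N with h | h
  · subst h; simp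
  · have hN : (0:ℝ) < N := Nat.cast_pos.mpr h
    have : (j:ℝ)/N ≤ 1 := by rw [div_le_one hN]; exact_mod_cast hj
    linarith

lemma bt_nonneg (hj : j ≤ N) (i : ℕ) : 0 ≤ bt N j i := by
  have h1 : (0:ℝ) ≤ (j:ℝ)/N := by positivity
  have h2 := q_nonneg hj
  unfold bt; positivity

lemma bt_sum (N j : ℕ) : ∑ i ∈ range (N + 1), bt N j i = 1 := by
  have h := add_pow ((j:ℝ)/N) (1 - (j:ℝ)/N) N
  have hone : ((j:ℝ)/N) + (1 - (j:ℝ)/N) = 1 := by ring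
  rw [hone, one_pow] at h
  calc ∑ i ∈ range (N+1), bt N j i
      = ∑ i ∈ range (N+1), ((j:ℝ)/N)^i * (1-(j:ℝ)/N)^(N-i) * (N.choose i : ℝ) :=
        Finset.sum_congr rfl fun i _ => by unfold bt; ring
    _ = 1 := h.symm

lemma bt_step_up (hj : j ≤ N) {i : ℕ} (hi : i < j) : bt N j i ≤ bt N j (i + 1) := by
  have hNn : 0 < N := by omega
  have hN : (0:ℝ) < N := Nat.cast_pos.mpr hNn
  have hNi : N - i = (N - (i+1)) + 1 := by omega
  have hnat : N.choose i * (N - j) ≤ N.choose (i+1) * j := by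
    have hc := Nat.choose_succ_right_eq N i
    have h1 : N.choose i * (N - j) * (i+1) ≤ N.choose (i+1) * j * (i+1) := by
      calc N.choose i * (N - j) * (i+1) ≤ N.choose i * ((N - i) * j) := by
              rw [mul_assoc]
              refine Nat.mul_le_mul_left _ ?_
              calc (N-j)*(i+1) ≤ (N-i)*(i+1) := Nat.mul_le_mul_right _ (by omega)
                _ ≤ (N-i)*j := Nat.mul_le_mul_left _ (by omega)
        _ = N.choose i * (N - i) * j := by ring
        _ = N.choose (i+1) * (i+1) * j := by rw [← hc]
        _ = N.choose (i+1) * j * (i+1) := by ring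
    exact Nat.le_of_mul_le_mul_right h1 (Nat.succ_pos i)
  have key : (N.choose i : ℝ) * (1 - (j:ℝ)/N) ≤ (N.choose (i+1) : ℝ) * ((j:ℝ)/N) := by
    have hqq : (1 - (j:ℝ)/N) = ((N - j : ℕ) : ℝ)/N := by
      rw [Nat.cast_sub hj]; field_simp
    rw [hqq, div_eq_mul_inv, div_eq_mul_inv, ← mul_assoc, ← mul_assoc]
    refine mul_le_mul_of_nonneg_right ?_ (by positivity)
    rw [← Nat.cast_mul, ← Nat.cast_mul, Nat.cast_le]
    exact hnat
  have h2 := q_nonneg hj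
  have hp : (0:ℝ) ≤ (j:ℝ)/N := by positivity
  unfold bt
  rw [hNi, pow_succ, pow_succ]
  calc (N.choose i : ℝ) * ((j:ℝ)/N)^i * ((1 - (j:ℝ)/N)^(N-(i+1)) * (1 - (j:ℝ)/N))
      = ((N.choose i : ℝ) * (1 - (j:ℝ)/N)) * (((j:ℝ)/N)^i * (1 - (j:ℝ)/N)^(N-(i+1))) := by ring
    _ ≤ ((N.choose (i+1) : ℝ) * ((j:ℝ)/N)) * (((j:ℝ)/N)^i * (1 - (j:ℝ)/N)^(N-(i+1))) := by
        refine mul_le_mul_of_nonneg_right key (by positivity)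
    _ = (N.choose (i+1) : ℝ) * (((j:ℝ)/N)^i * ((j:ℝ)/N)) * (1 - (j:ℝ)/N)^(N-(i+1)) := by ring

lemma bt_step_down (hj : j ≤ N) {i : ℕ} (hi : j ≤ i) : bt N j (i + 1) ≤ bt N j i := by
  rcases le_or_gt N i with hiN | hiN
  · have hz : N.choose (i+1) = 0 := Nat.choose_eq_zero_of_lt (by omega)
    have := bt_nonneg hj i
    unfold bt at *
    rw [hz]
    simpa using this
  have hNn : 0 < N := by omega
  have hN : (0:ℝ) < N := Nat.cast_pos.mpr hNn
  have hNi : N - i = (N - (i+1)) + 1 := by omega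
  have hnat : N.choose (i+1) * j ≤ N.choose i * (N - j) := by
    have hc := Nat.choose_succ_right_eq N i
    have h1 : N.choose (i+1) * j * (i+1) ≤ N.choose i * (N - j) * (i+1) := by
      calc N.choose (i+1) * j * (i+1) = N.choose (i+1) * (i+1) * j := by ring
        _ = N.choose i * (N - i) * j := by rw [hc]
        _ = N.choose i * ((N - i) * j) := by ring
        _ ≤ N.choose i * ((N - j) * (i+1)) := by
              refine Nat.mul_le_mul_left _ ?_
              calc (N-i)*j ≤ (N-j)*j := Nat.mul_le_mul_right _ (by omega)
                _ ≤ (N-j)*(i+1) := Nat.mul_le_mul_left _ (by omega)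
        _ = N.choose i * (N - j) * (i+1) := by ring
    exact Nat.le_of_mul_le_mul_right h1 (Nat.succ_pos i)
  have key : (N.choose (i+1) : ℝ) * ((j:ℝ)/N) ≤ (N.choose i : ℝ) * (1 - (j:ℝ)/N) := by
    have hqq : (1 - (j:ℝ)/N) = ((N - j : ℕ) : ℝ)/N := by
      rw [Nat.cast_sub hj]; field_simp
    rw [hqq, div_eq_mul_inv, div_eq_mul_inv, ← mul_assoc, ← mul_assoc]
    refine mul_le_mul_of_nonneg_right ?_ (by positivity)
    rw [← Nat.cast_mul, ← Nat.cast_mul, Nat.cast_le]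
    exact hnat
  have h2 := q_nonneg hj
  have hp : (0:ℝ) ≤ (j:ℝ)/N := by positivity
  unfold bt
  rw [hNi, pow_succ, pow_succ]
  calc (N.choose (i+1) : ℝ) * (((j:ℝ)/N)^i * ((j:ℝ)/N)) * (1 - (j:ℝ)/N)^(N-(i+1))
      = ((N.choose (i+1) : ℝ) * ((j:ℝ)/N)) * (((j:ℝ)/N)^i * (1 - (j:ℝ)/N)^(N-(i+1))) := by ring
    _ ≤ ((N.choose i : ℝ) * (1 - (j:ℝ)/N)) * (((j:ℝ)/N)^i * (1 - (j:ℝ)/N)^(N-(i+1))) := by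
        refine mul_le_mul_of_nonneg_right key (by positivity)
    _ = (N.choose i : ℝ) * ((j:ℝ)/N)^i * ((1 - (j:ℝ)/N)^(N-(i+1)) * (1 - (j:ℝ)/N)) := by ring

lemma bt_le_up (hj : j ≤ N) : ∀ d, bt N j (j - d) ≤ bt N j j := by
  intro d
  induction d with
  | zero => simp
  | succ d ih =>
      rcases le_or_gt j d with h | h
      · have he : j - (d+1) = j - d := by omega
        rw [he]; exact ih
      · have h1 : bt N j (j - (d+1)) ≤ bt N j (j - (d+1) + 1) := bt_step_up hj (by omega)
        have h2 : j - (d+1) + 1 = j - d := by omega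
        rw [h2] at h1; exact h1.trans ih

lemma bt_le_down (hj : j ≤ N) : ∀ d, bt N j (j + d) ≤ bt N j j := by
  intro d
  induction d with
  | zero => simp
  | succ d ih =>
      have h1 : bt N j (j + d + 1) ≤ bt N j (j + d) := bt_step_down hj (by omega)
      exact h1.trans ih

lemma bt_le_max (hj : j ≤ N) (i : ℕ) : bt N j i ≤ bt N j j := by
  rcases le_or_gt i j with h | h
  · have he : i = j - (j - i) := by omega
    rw [he]; exact bt_le_up hj _
  · have he : i = j + (i - j) := by omega
    rw [he]; exact bt_le_down hj _

lemma one_le_bt_max (hj : j ≤ N) : 1 ≤ (N + 1 : ℝ) * bt N j j := by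
  have hs := bt_sum N j
  have h : ∑ i ∈ range (N + 1), bt N j i ≤ ∑ i ∈ range (N + 1), bt N j j :=
    Finset.sum_le_sum fun i _ => bt_le_max hj i
  rw [hs] at h
  simpa [Finset.sum_const, Finset.card_range, nsmul_eq_mul, Nat.cast_add] using h

lemma bt_le_one (hj : j ≤ N) : bt N j j ≤ 1 := by
  rw [← bt_sum N j]
  exact Finset.single_le_sum (fun i _ => bt_nonneg hj i) (by simp [Nat.lt_succ_iff, hj])

lemma key_prod (hj0 : 0 < j) (hjN : j < N) :
    Real.exp (N * ent ((j:ℝ)/N)) * (((j:ℝ)/N)^j * (1 - (j:ℝ)/N)^(N - j)) = 1 := by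
  have hN : (0:ℝ) < N := Nat.cast_pos.mpr (by omega)
  have hp : (0:ℝ) < (j:ℝ)/N := by positivity
  have hq : (0:ℝ) < 1 - (j:ℝ)/N := by
    have : (j:ℝ)/N < 1 := by rw [div_lt_one hN]; exact_mod_cast hjN
    linarith
  rw [← Real.exp_log (x := ((j:ℝ)/N)^j * (1 - (j:ℝ)/N)^(N-j)) (by positivity),
    ← Real.exp_add, Real.exp_eq_one_iff]
  rw [Real.log_mul (by positivity) (by positivity), Real.log_pow, Real.log_pow,
    Nat.cast_sub hjN.le]
  have hNp : (N:ℝ) * ((j:ℝ)/N) = j := by field_simp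
  have hNq : (N:ℝ) * (1 - (j:ℝ)/N) = (N:ℝ) - j := by field_simp
  simp only [ent, Real.negMulLog]
  linear_combination (-(Real.log ((j:ℝ)/N))) * hNp + (-(Real.log (1 - (j:ℝ)/N))) * hNq

lemma choose_le (hj : j ≤ N) : (N.choose j : ℝ) ≤ Real.exp (N * ent ((j:ℝ)/N)) := by
  rcases Nat.eq_zero_or_pos j with rfl | hj0
  · simp [ent]
  rcases eq_or_lt_of_le hj with h | hjN
  · subst h
    have hN : (0:ℝ) < j := Nat.cast_pos.mpr hj0
    rw [div_self hN.ne']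
    simp [ent]
  · have h1 := bt_le_one hj
    have h2 := key_prod hj0 hjN
    set P := ((j:ℝ)/N)^j * (1 - (j:ℝ)/N)^(N-j) with hP
    have hN : (0:ℝ) < N := Nat.cast_pos.mpr (by omega)
    have hp : (0:ℝ) < (j:ℝ)/N := by positivity
    have hq : (0:ℝ) < 1 - (j:ℝ)/N := by
      have : (j:ℝ)/N < 1 := by rw [div_lt_one hN]; exact_mod_cast hjN
      linarith
    have hpos : (0:ℝ) < P := by rw [hP]; positivity
    have h1' : (N.choose j : ℝ) * P ≤ Real.exp (N * ent ((j:ℝ)/N)) * P := by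
      rw [h2]; unfold bt at h1; rw [hP, ← mul_assoc]; exact h1
    exact le_of_mul_le_mul_right h1' hpos

lemma exp_le_choose (hj : j ≤ N) :
    Real.exp (N * ent ((j:ℝ)/N)) ≤ (N + 1 : ℝ) * N.choose j := by
  rcases Nat.eq_zero_or_pos j with rfl | hj0
  · simp only [Nat.cast_zero, zero_div, ent, sub_zero, Real.negMulLog_zero,
      Real.negMulLog_one, add_zero, mul_zero, Real.exp_zero, Nat.choose_zero_right,
      Nat.cast_one, mul_one]
    have : (0:ℝ) ≤ N := Nat.cast_nonneg N
    linarith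
  rcases eq_or_lt_of_le hj with h | hjN
  · subst h
    have hN : (0:ℝ) < j := Nat.cast_pos.mpr hj0
    rw [div_self hN.ne']
    simp only [ent, Real.negMulLog_one, sub_self, Real.negMulLog_zero, add_zero, zero_add,
      mul_zero, Real.exp_zero, Nat.choose_self, Nat.cast_one, mul_one]
    have : (0:ℝ) ≤ j := Nat.cast_nonneg j
    linarith
  · have h1 := one_le_bt_max hj
    have h2 := key_prod hj0 hjN
    set P := ((j:ℝ)/N)^j * (1 - (j:ℝ)/N)^(N-j) with hP
    have hN : (0:ℝ) < N := Nat.cast_pos.mpr (by omega)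
    have hp : (0:ℝ) < (j:ℝ)/N := by positivity
    have hq : (0:ℝ) < 1 - (j:ℝ)/N := by
      have : (j:ℝ)/N < 1 := by rw [div_lt_one hN]; exact_mod_cast hjN
      linarith
    have hpos : (0:ℝ) < P := by rw [hP]; positivity
    have h1' : Real.exp (N * ent ((j:ℝ)/N)) * P ≤ ((N + 1 : ℝ) * N.choose j) * P := by
      rw [h2]; unfold bt at h1
      calc (1:ℝ) ≤ (N+1:ℝ) * ((N.choose j : ℝ) * ((j:ℝ)/N)^j * (1 - (j:ℝ)/N)^(N-j)) := h1
        _ = ((N + 1 : ℝ) * N.choose j) * P := by rw [hP]; ring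
    exact le_of_mul_le_mul_right h1' hpos

end CWAux

/-- the generalized Curie–Weiss k-spin model has a thermodynamic limit. -/
theorem curie_weiss_pspin_limit (β : ℝ) (hβ : 0 < β) (k : ℕ) (hk : 1 ≤ k) :
    ∃ L : ℝ, Tendsto (fun N : ℕ =>
      (1 / (N : ℝ)) * Real.log (∑ σ : Fin N → Bool, Real.exp (β * N * (mag N σ) ^ k)))
      atTop (nhds L) := by
  classical
  set φ : ℝ → ℝ := fun p => β * (2*p - 1)^k + CWAux.ent p with hφdef
  have hcont : Continuous φ := by
    apply Continuous.add
    · fun_prop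
    · exact (Real.continuous_negMulLog).add
        (Real.continuous_negMulLog.comp (continuous_const.sub continuous_id))
  obtain ⟨p₀, hp₀mem, hp₀max⟩ :=
    isCompact_Icc.exists_isMaxOn (Set.nonempty_Icc.mpr zero_le_one) hcont.continuousOn
  obtain ⟨hp₀0, hp₀1⟩ := hp₀mem
  refine ⟨φ p₀, ?_⟩
  set a : ℕ → ℝ := fun N =>
    (1 / (N : ℝ)) * Real.log (∑ σ : Fin N → Bool, Real.exp (β * N * (mag N σ) ^ k)) with hadef
  -- rewrite the sum over configurations as a sum over magnetization levels
  have hS : ∀ N : ℕ, 1 ≤ N → ∑ σ : Fin N → Bool, Real.exp (β * N * (mag N σ) ^ k)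
      = ∑ j ∈ range (N+1), (N.choose j : ℝ) *
          Real.exp ((N : ℝ) * (β * (2*((j:ℝ)/N) - 1)^k)) := by
    intro N hN
    have hN0 : (0:ℝ) < N := Nat.cast_pos.mpr hN
    rw [← CWAux.sum_bool_eq N (fun j => Real.exp ((N:ℝ) * (β * (2*((j:ℝ)/N) - 1)^k)))]
    refine Fintype.sum_congr _ _ fun σ => ?_
    congr 1
    rw [mag, CWAux.spin_sum N σ]
    set c := ((univ.filter (fun i => σ i)).card : ℝ)
    have he : (2*c - N)/N = 2*(c/N) - 1 := by field_simp
    rw [he]; ring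
  -- positivity of the partition function
  have hSpos : ∀ N : ℕ, (0:ℝ) < ∑ σ : Fin N → Bool, Real.exp (β * N * (mag N σ) ^ k) :=
    fun N => Finset.sum_pos (fun σ _ => Real.exp_pos _) univ_nonempty
  -- upper bound
  have hupper : ∀ N : ℕ, 1 ≤ N → a N ≤ φ p₀ + Real.log ((N:ℝ)+1) / N := by
    intro N hN
    have hN0 : (0:ℝ) < N := Nat.cast_pos.mpr hN
    have hsum : ∑ σ : Fin N → Bool, Real.exp (β * N * (mag N σ) ^ k)
        ≤ ((N:ℝ)+1) * Real.exp ((N:ℝ) * φ p₀) := by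
      rw [hS N hN]
      calc ∑ j ∈ range (N+1), (N.choose j : ℝ) *
              Real.exp ((N : ℝ) * (β * (2*((j:ℝ)/N) - 1)^k))
          ≤ ∑ _j ∈ range (N+1), Real.exp ((N:ℝ) * φ p₀) := by
            refine Finset.sum_le_sum fun j hj => ?_
            rw [mem_range, Nat.lt_succ_iff] at hj
            have hmem : (j:ℝ)/N ∈ Set.Icc (0:ℝ) 1 := by
              constructor
              · positivity
              · rw [div_le_one hN0]; exact_mod_cast hj
            have h1 : (N.choose j : ℝ) * Real.exp ((N : ℝ) * (β * (2*((j:ℝ)/N) - 1)^k))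
                ≤ Real.exp ((N:ℝ) * CWAux.ent ((j:ℝ)/N)) *
                  Real.exp ((N : ℝ) * (β * (2*((j:ℝ)/N) - 1)^k)) :=
              mul_le_mul_of_nonneg_right (CWAux.choose_le hj) (Real.exp_nonneg _)
            refine h1.trans ?_
            rw [← Real.exp_add]
            apply Real.exp_le_exp.mpr
            have hmax := hp₀max hmem
            have hφj : (N:ℝ) * CWAux.ent ((j:ℝ)/N) + (N:ℝ) * (β * (2*((j:ℝ)/N) - 1)^k)
                = (N:ℝ) * φ ((j:ℝ)/N) := by rw [hφdef]; ring
            rw [hφj]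
            exact mul_le_mul_of_nonneg_left hmax hN0.le
        _ = ((N:ℝ)+1) * Real.exp ((N:ℝ) * φ p₀) := by
            rw [Finset.sum_const, Finset.card_range, nsmul_eq_mul]; push_cast; ring
    have hlog : Real.log (∑ σ : Fin N → Bool, Real.exp (β * N * (mag N σ) ^ k))
        ≤ Real.log ((N:ℝ)+1) + (N:ℝ) * φ p₀ := by
      have hll := Real.log_le_log (hSpos N) hsum
      rwa [Real.log_mul (by positivity) (Real.exp_ne_zero _), Real.log_exp] at hll
    calc a N ≤ (1 / (N:ℝ)) * (Real.log ((N:ℝ)+1) + (N:ℝ) * φ p₀) :=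
          mul_le_mul_of_nonneg_left hlog (by positivity)
      _ = φ p₀ + Real.log ((N:ℝ)+1) / N := by field_simp; ring
  -- lower bound
  have hlower : ∀ N : ℕ, 1 ≤ N →
      φ ((⌊p₀ * N⌋₊ : ℝ)/N) - Real.log ((N:ℝ)+1) / N ≤ a N := by
    intro N hN
    have hN0 : (0:ℝ) < N := Nat.cast_pos.mpr hN
    set j := ⌊p₀ * N⌋₊ with hjdef
    have hjN : j ≤ N := by
      have h1 : p₀ * N ≤ ((N:ℕ):ℝ) := by nlinarith
      have h2 := Nat.floor_mono h1
      simpa using h2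
    have hterm : Real.exp ((N:ℝ) * φ ((j:ℝ)/N)) / ((N:ℝ)+1)
        ≤ ∑ σ : Fin N → Bool, Real.exp (β * N * (mag N σ) ^ k) := by
      rw [hS N hN]
      have h1 : Real.exp ((N:ℝ) * φ ((j:ℝ)/N)) / ((N:ℝ)+1)
          ≤ (N.choose j : ℝ) * Real.exp ((N : ℝ) * (β * (2*((j:ℝ)/N) - 1)^k)) := by
        have h2 := CWAux.exp_le_choose hjN
        have hNp1 : (0:ℝ) < (N:ℝ)+1 := by positivity
        rw [div_le_iff₀ hNp1]
        have hφj : (N:ℝ) * φ ((j:ℝ)/N)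
            = (N:ℝ) * CWAux.ent ((j:ℝ)/N) + (N:ℝ) * (β * (2*((j:ℝ)/N) - 1)^k) := by
          rw [hφdef]; ring
        rw [hφj, Real.exp_add]
        calc Real.exp ((N:ℝ) * CWAux.ent ((j:ℝ)/N)) *
                Real.exp ((N : ℝ) * (β * (2*((j:ℝ)/N) - 1)^k))
            ≤ (((N:ℝ) + 1) * N.choose j) * Real.exp ((N : ℝ) * (β * (2*((j:ℝ)/N) - 1)^k)) :=
              mul_le_mul_of_nonneg_right h2 (Real.exp_nonneg _)
          _ = (N.choose j : ℝ) * Real.exp ((N : ℝ) * (β * (2*((j:ℝ)/N) - 1)^k)) * ((N:ℝ)+1) := by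
              ring
      refine h1.trans ?_
      refine Finset.single_le_sum (f := fun i => (N.choose i : ℝ) *
          Real.exp ((N : ℝ) * (β * (2*((i:ℝ)/N) - 1)^k))) (fun i _ => by positivity) ?_
      rw [mem_range, Nat.lt_succ_iff]; exact hjN
    have hlog : (N:ℝ) * φ ((j:ℝ)/N) - Real.log ((N:ℝ)+1)
        ≤ Real.log (∑ σ : Fin N → Bool, Real.exp (β * N * (mag N σ) ^ k)) := by
      have h3 := Real.log_le_log (by positivity) hterm
      rwa [Real.log_div (Real.exp_ne_zero _) (by positivity), Real.log_exp] at h3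
    calc φ ((j:ℝ)/N) - Real.log ((N:ℝ)+1) / N
        = (1 / (N:ℝ)) * ((N:ℝ) * φ ((j:ℝ)/N) - Real.log ((N:ℝ)+1)) := by field_simp
      _ ≤ a N := mul_le_mul_of_nonneg_left hlog (by positivity)
  -- log (N+1) / N → 0
  have hlogto : Tendsto (fun N : ℕ => Real.log ((N:ℝ)+1) / N) atTop (nhds 0) := by
    have h1 : Tendsto (fun x : ℝ => Real.log x / x) atTop (nhds 0) :=
      Real.isLittleO_log_id_atTop.tendsto_div_nhds_zero
    have h2 : Tendsto (fun N : ℕ => (N:ℝ)+1) atTop atTop :=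
      tendsto_atTop_add_const_right _ _ tendsto_natCast_atTop_atTop
    have h3 : Tendsto (fun N : ℕ => Real.log ((N:ℝ)+1) / ((N:ℝ)+1)) atTop (nhds 0) :=
      h1.comp h2
    have h4 : Tendsto (fun N : ℕ => ((N:ℝ)+1) / N) atTop (nhds 1) := by
      have h5 : Tendsto (fun N : ℕ => 1 + 1/(N:ℝ)) atTop (nhds 1) := by
        simpa using (tendsto_const_nhds : Tendsto (fun _ : ℕ => (1:ℝ)) atTop (nhds 1)).add tendsto_one_div_atTop_nhds_zero_nat
      refine Tendsto.congr' ?_ h5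
      filter_upwards [eventually_ge_atTop 1] with N hN
      have hN0 : (0:ℝ) < N := Nat.cast_pos.mpr hN
      field_simp
    have h6 := h3.mul h4
    rw [zero_mul] at h6
    refine Tendsto.congr' ?_ h6
    filter_upwards [eventually_ge_atTop 1] with N hN
    have hN0 : (0:ℝ) < N := Nat.cast_pos.mpr hN
    field_simp
  -- floor(p₀ N)/N → p₀
  have hjto : Tendsto (fun N : ℕ => (⌊p₀ * N⌋₊ : ℝ)/N) atTop (nhds p₀) := by
    have hl : Tendsto (fun N : ℕ => p₀ - 1/(N:ℝ)) atTop (nhds p₀) := by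
      simpa using (tendsto_const_nhds : Tendsto (fun _ : ℕ => p₀) atTop (nhds p₀)).sub tendsto_one_div_atTop_nhds_zero_nat
    refine tendsto_of_tendsto_of_tendsto_of_le_of_le' hl tendsto_const_nhds ?_ ?_
    · filter_upwards [eventually_ge_atTop 1] with N hN
      have hN0 : (0:ℝ) < N := Nat.cast_pos.mpr hN
      have h1 : p₀ * N - 1 < (⌊p₀ * N⌋₊ : ℝ) := Nat.sub_one_lt_floor _
      have h2 : p₀ ≤ ((⌊p₀ * N⌋₊ : ℝ) + 1)/N := by
        rw [le_div_iff₀ hN0]; nlinarith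
      have h3 : ((⌊p₀ * N⌋₊ : ℝ) + 1)/N = (⌊p₀ * N⌋₊ : ℝ)/N + 1/N := add_div _ _ _
      linarith
    · filter_upwards [eventually_ge_atTop 1] with N hN
      have hN0 : (0:ℝ) < N := Nat.cast_pos.mpr hN
      have h1 : (⌊p₀ * N⌋₊ : ℝ) ≤ p₀ * N := Nat.floor_le (by positivity)
      rw [div_le_iff₀ hN0]
      linarith
  have hφto : Tendsto (fun N : ℕ => φ ((⌊p₀ * N⌋₊ : ℝ)/N)) atTop (nhds (φ p₀)) :=
    (hcont.tendsto p₀).comp hjto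
  -- squeeze
  have hu : Tendsto (fun N : ℕ => φ p₀ + Real.log ((N:ℝ)+1) / N) atTop (nhds (φ p₀)) := by
    simpa using tendsto_const_nhds.add hlogto
  have hl : Tendsto (fun N : ℕ => φ ((⌊p₀ * N⌋₊ : ℝ)/N) - Real.log ((N:ℝ)+1) / N)
      atTop (nhds (φ p₀)) := by
    simpa using hφto.sub hlogto
  refine tendsto_of_tendsto_of_tendsto_of_le_of_le' hl hu ?_ ?_
  · filter_upwards [eventually_ge_atTop 1] with N hN
    exact hlower N hN
  · filter_upwards [eventually_ge_atTop 1] with N hN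
    exact hupper N hN
end

section
/- For any polynomial g(x) = ∑_{k=0}^n a_k x^k with real coefficients, the free energy density α_N = (1/N) log ∑_{σ∈{-1,1}^N} exp(βN g(m_N(σ))) converges as N → ∞. -/
open Finset Filter

lemma sum_spin_eq (N : ℕ) (σ : Fin N → Bool) :
    ∑ i, spin (σ i) = 2 * ((Finset.univ.filter fun i => σ i = true).card : ℝ) - N := by
  have : ∀ i, spin (σ i) = 2 * (if σ i = true then (1:ℝ) else 0) - 1 := by
    intro i; cases σ i <;> norm_num [spin]
  rw [Finset.sum_congr rfl fun i _ => this i]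
  rw [Finset.sum_sub_distrib, ← Finset.mul_sum, Finset.sum_boole, Finset.sum_const]
  simp [Finset.card_univ]

lemma sum_group (N : ℕ) (f : ℝ → ℝ) :
    ∑ σ : Fin N → Bool, f (∑ i, spin (σ i)) =
      ∑ j ∈ Finset.range (N+1), (N.choose j : ℝ) * f (2*j - N) := by
  have h1 : ∑ σ : Fin N → Bool, f (∑ i, spin (σ i)) =
      ∑ s ∈ (Finset.univ : Finset (Fin N)).powerset, f (2*(s.card:ℝ) - N) := by
    refine Finset.sum_nbij' (fun σ => Finset.univ.filter fun i => σ i = true)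
      (fun s => fun i => i ∈ s) ?_ ?_ ?_ ?_ ?_
    · intro σ _; simp
    · intro s _; simp
    · intro σ _; funext i; simp
    · intro s _; ext i; simp
    · intro σ _; rw [sum_spin_eq]
  rw [h1]
  have := Finset.sum_powerset_apply_card (fun j : ℕ => f (2*(j:ℝ) - N)) (x := (Finset.univ : Finset (Fin N)))
  rw [this]
  simp [Finset.card_univ, nsmul_eq_mul]

lemma fact_low (n : ℕ) : (n:ℝ)^n ≤ (Nat.factorial n : ℝ) * Real.exp n := by
  have h : (n:ℝ)^n / (Nat.factorial n : ℝ) ≤ Real.exp n := by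
    calc (n:ℝ)^n / (Nat.factorial n : ℝ)
        ≤ ∑ i ∈ Finset.range (n+1), (n:ℝ)^i / (Nat.factorial i : ℝ)
          := Finset.single_le_sum (f := fun i => (n:ℝ)^i / (Nat.factorial i : ℝ))
              (fun i _ => by positivity) (Finset.self_mem_range_succ n)
      _ ≤ Real.exp n := Real.sum_le_exp_of_nonneg (by positivity) _
  have hfac : (0:ℝ) < (Nat.factorial n : ℝ) := by exact_mod_cast Nat.factorial_pos n
  calc (n:ℝ)^n = (n:ℝ)^n / (Nat.factorial n : ℝ) * (Nat.factorial n : ℝ) := by field_simp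
    _ ≤ Real.exp n * (Nat.factorial n : ℝ) := by gcongr
    _ = (Nat.factorial n : ℝ) * Real.exp n := mul_comm _ _

lemma exp_le_ratio (n : ℕ) (hn : 1 ≤ n) : Real.exp 1 ≤ (((n:ℝ)+1)/n)^(n+1) := by
  have hn' : (0:ℝ) < n := by exact_mod_cast hn
  set E := Real.exp (1/((n:ℝ)+1)) with hE
  have hEpos : 0 < E := Real.exp_pos _
  have h5 : (n:ℝ)/((n:ℝ)+1) ≤ Real.exp (-(1/((n:ℝ)+1))) := by
    have := Real.add_one_le_exp (-(1/((n:ℝ)+1)))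
    have h2 : (n:ℝ)/((n:ℝ)+1) = -(1/((n:ℝ)+1)) + 1 := by field_simp; ring
    linarith
  have hmul : E * ((n:ℝ)/((n:ℝ)+1)) ≤ 1 := by
    calc E * ((n:ℝ)/((n:ℝ)+1)) ≤ E * Real.exp (-(1/((n:ℝ)+1))) := by gcongr
      _ = 1 := by rw [hE, ← Real.exp_add]; simp
  have h6 : E ≤ ((n:ℝ)+1)/n := by
    rw [le_div_iff₀ hn']
    have hq : E * ((n:ℝ)/((n:ℝ)+1)) * ((n:ℝ)+1) = E * n := by field_simp
    nlinarith
  calc Real.exp 1 = E ^ (n+1) := by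
        rw [hE, ← Real.exp_nat_mul]
        congr 1
        push_cast
        field_simp
    _ ≤ (((n:ℝ)+1)/n)^(n+1) := pow_le_pow_left₀ hEpos.le h6 _

lemma fact_up (n : ℕ) (hn : 1 ≤ n) :
    (Nat.factorial n : ℝ) ≤ (n:ℝ)^(n+1) * Real.exp (1 - n) := by
  induction n with
  | zero => omega
  | succ m ih =>
    rcases Nat.eq_or_lt_of_le hn with h1 | h1
    · simp [← h1]
    · have hm : 1 ≤ m := by omega
      have ihm := ih hm
      have hm' : (0:ℝ) < m := by exact_mod_cast hm
      have key : Real.exp 1 * (m:ℝ)^(m+1) ≤ ((m:ℝ)+1)^(m+1) := by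
        have h3 := exp_le_ratio m hm
        have h2 : (((m:ℝ)+1)/m)^(m+1) * (m:ℝ)^(m+1) = ((m:ℝ)+1)^(m+1) := by
          rw [← mul_pow]; congr 1; field_simp
        nlinarith [pow_pos hm' (m+1)]
      have hfs : (Nat.factorial (m+1) : ℝ) = ((m:ℝ)+1) * (Nat.factorial m : ℝ) := by
        rw [Nat.factorial_succ]; push_cast; ring
      rw [hfs]
      have e1 : Real.exp (1 - ((m:ℕ):ℝ)) = Real.exp 1 * Real.exp (1 - (((m+1):ℕ):ℝ)) := by
        rw [← Real.exp_add]; congr 1; push_cast; ring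
      calc ((m:ℝ)+1) * (Nat.factorial m : ℝ)
          ≤ ((m:ℝ)+1) * ((m:ℝ)^(m+1) * Real.exp (1 - m)) := by gcongr
        _ = ((m:ℝ)+1) * (Real.exp 1 * (m:ℝ)^(m+1)) * Real.exp (1 - (((m+1):ℕ):ℝ)) := by
            rw [e1]; push_cast; ring
        _ ≤ ((m:ℝ)+1) * ((m:ℝ)+1)^(m+1) * Real.exp (1 - (((m+1):ℕ):ℝ)) := by
            gcongr
        _ = (((m+1):ℕ):ℝ)^(m+1+1) * Real.exp (1 - (((m+1):ℕ):ℝ)) := by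
            push_cast; ring

lemma entropy_eq (j k : ℕ) (hj : 1 ≤ j) (hk : 1 ≤ k) :
    Real.exp ((((j+k:ℕ)):ℝ) * Real.binEntropy ((j:ℝ)/((j+k:ℕ):ℝ)))
      = (((j+k:ℕ):ℝ)/j)^j * (((j+k:ℕ):ℝ)/k)^k := by
  have hj' : (0:ℝ) < j := by exact_mod_cast hj
  have hk' : (0:ℝ) < k := by exact_mod_cast hk
  set Nr : ℝ := ((j+k:ℕ):ℝ) with hNr
  have hNr' : Nr = (j:ℝ) + k := by rw [hNr]; push_cast; ring
  have hNpos : (0:ℝ) < Nr := by rw [hNr']; positivity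
  have key : Nr * Real.binEntropy ((j:ℝ)/Nr)
      = (j:ℝ) * Real.log (Nr/j) + (k:ℝ) * Real.log (Nr/k) := by
    rw [Real.binEntropy]
    have h1 : ((j:ℝ)/Nr)⁻¹ = Nr/j := by rw [inv_div]
    have h2 : (1:ℝ) - (j:ℝ)/Nr = (k:ℝ)/Nr := by field_simp [hNr']; linarith
    have h3 : ((k:ℝ)/Nr)⁻¹ = Nr/k := by rw [inv_div]
    rw [h2, h1, h3]
    field_simp
  rw [key, Real.exp_add]
  congr 1
  · rw [← Real.exp_log (x := (Nr/j)^j) (by positivity), Real.log_pow]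
  · rw [← Real.exp_log (x := (Nr/k)^k) (by positivity), Real.log_pow]

lemma choose_le_exp (N j : ℕ) (hj : j ≤ N) :
    (N.choose j : ℝ) ≤ Real.exp ((N:ℝ) * Real.binEntropy ((j:ℝ)/N)) := by
  rcases Nat.eq_zero_or_pos j with hj0 | hj0
  · subst hj0; simp
  rcases eq_or_lt_of_le hj with hjN | hjN
  · subst hjN
    have : (0:ℝ) < j := by exact_mod_cast hj0
    simp [div_self this.ne']
  -- 0 < j < N
  have hN : 0 < N := lt_of_le_of_lt (Nat.zero_le j) hjN
  have hNr : (0:ℝ) < N := by exact_mod_cast hN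
  have hjr : (0:ℝ) < j := by exact_mod_cast hj0
  have hkr : (0:ℝ) < ((N-j:ℕ):ℝ) := by
    have : 0 < N - j := by omega
    exact_mod_cast this
  set p : ℝ := (j:ℝ)/N with hp
  set q : ℝ := ((N-j:ℕ):ℝ)/N with hq
  have hpq : p + q = 1 := by
    rw [hp, hq, ← add_div, div_eq_one_iff_eq hNr.ne']
    have : ((N-j:ℕ):ℝ) = (N:ℝ) - j := by
      have := Nat.cast_sub hj (R := ℝ); linarith
    linarith
  have hsum : ∑ m ∈ Finset.range (N+1), p^m * q^(N-m) * (N.choose m : ℝ) = 1 := by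
    rw [← add_pow, hpq, one_pow]
  have hterm : p^j * q^(N-j) * (N.choose j : ℝ) ≤ 1 := by
    rw [← hsum]
    exact Finset.single_le_sum (f := fun m => p^m * q^(N-m) * (N.choose m : ℝ))
      (fun m _ => by positivity) (by simp; omega)
  have hE : Real.exp ((N:ℝ) * Real.binEntropy ((j:ℝ)/N)) = ((N:ℝ)/j)^j * ((N:ℝ)/(N-j:ℕ))^(N-j) := by
    have hk1 : 1 ≤ N - j := by omega
    have := entropy_eq j (N-j) hj0 hk1
    rwa [Nat.add_sub_cancel' hj] at this
  rw [hE]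
  have hppos : 0 < p^j * q^(N-j) := by positivity
  rw [← one_div_one_div (((N:ℝ)/j)^j * ((N:ℝ)/(N-j:ℕ))^(N-j))]
  rw [le_div_iff₀ (by positivity)]
  have heq : 1 / (((N:ℝ)/j)^j * ((N:ℝ)/(N-j:ℕ))^(N-j)) = p^j * q^(N-j) := by
    rw [hp, hq]
    field_simp
    have e1 : ((N:ℝ)/j)^j * ((j:ℝ)/N)^j = 1 := by
      rw [← mul_pow, div_mul_div_comm, mul_comm (N:ℝ), div_self (mul_pos hjr hNr).ne', one_pow]
    have e2 : ((N:ℝ)/(N-j:ℕ))^(N-j) * (((N-j:ℕ):ℝ)/N)^(N-j) = 1 := by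
      rw [← mul_pow, div_mul_div_comm, mul_comm (N:ℝ), div_self (mul_pos hkr hNr).ne', one_pow]
    linear_combination (-(((N:ℝ)/(N-j:ℕ))^(N-j) * (((N-j:ℕ):ℝ)/N)^(N-j))) * e1 - e2
  rw [heq]
  linarith [hterm]

lemma exp_le_choose (N j : ℕ) (hN : 1 ≤ N) (hj : j ≤ N) :
    Real.exp ((N:ℝ) * Real.binEntropy ((j:ℝ)/N)) ≤ (N.choose j : ℝ) * (Real.exp 2 * (N:ℝ)^2) := by
  have hNr : (0:ℝ) < N := by exact_mod_cast hN
  have htriv : (1:ℝ) ≤ Real.exp 2 * (N:ℝ)^2 := by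
    have h1 : (1:ℝ) ≤ Real.exp 2 := Real.one_le_exp (by norm_num)
    have h2 : (1:ℝ) ≤ (N:ℝ)^2 := by
      have : (1:ℝ) ≤ (N:ℝ) := by exact_mod_cast hN
      nlinarith
    nlinarith
  rcases Nat.eq_zero_or_pos j with hj0 | hj0
  · subst hj0; simpa using htriv
  rcases eq_or_lt_of_le hj with hjN | hjN
  · subst hjN
    have : (0:ℝ) < j := by exact_mod_cast hj0
    simpa [div_self this.ne'] using htriv
  -- 0 < j < N
  set k := N - j with hk
  have hjk : j + k = N := by omega
  have hk0 : 1 ≤ k := by omega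
  have hjr : (0:ℝ) < j := by exact_mod_cast hj0
  have hkr : (0:ℝ) < k := by exact_mod_cast hk0
  have hE : Real.exp ((N:ℝ) * Real.binEntropy ((j:ℝ)/N)) = ((N:ℝ)/j)^j * ((N:ℝ)/k)^k := by
    have := entropy_eq j k hj0 hk0
    rwa [hjk] at this
  rw [hE]
  have hNN : ((N:ℝ)/j)^j * ((N:ℝ)/k)^k = (N:ℝ)^N / ((j:ℝ)^j * (k:ℝ)^k) := by
    rw [div_pow, div_pow, div_mul_div_comm, ← pow_add, hjk]
  rw [hNN, div_le_iff₀ (by positivity)]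
  have hfacid : (N.choose j : ℝ) * (Nat.factorial j : ℝ) * (Nat.factorial k : ℝ)
      = (Nat.factorial N : ℝ) := by
    have := Nat.choose_mul_factorial_mul_factorial hj
    exact_mod_cast this
  have hCpos : (0:ℝ) < (N.choose j : ℝ) := by
    exact_mod_cast Nat.choose_pos hj
  have hexpc : Real.exp (1 - (j:ℕ)) * Real.exp (1 - (k:ℕ)) * Real.exp N = Real.exp 2 := by
    rw [← Real.exp_add, ← Real.exp_add]
    congr 1
    have : (N:ℝ) = (j:ℝ) + k := by exact_mod_cast hjk.symm
    linarith
  calc (N:ℝ)^N ≤ (Nat.factorial N : ℝ) * Real.exp N := fact_low N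
    _ = (N.choose j : ℝ) * (Nat.factorial j : ℝ) * (Nat.factorial k : ℝ) * Real.exp N := by
        rw [hfacid]
    _ = ((N.choose j : ℝ) * Real.exp N) * ((Nat.factorial j : ℝ) * (Nat.factorial k : ℝ)) := by
        ring
    _ ≤ ((N.choose j : ℝ) * Real.exp N) *
          (((j:ℝ)^(j+1) * Real.exp (1 - j)) * ((k:ℝ)^(k+1) * Real.exp (1 - k))) := by
        have h2 := fact_up j hj0
        have h3 := fact_up k hk0
        exact mul_le_mul_of_nonneg_left
          (mul_le_mul h2 h3 (by positivity) (by positivity)) (by positivity)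
    _ = (N.choose j : ℝ) * ((j:ℝ)*k*Real.exp 2) * ((j:ℝ)^j * (k:ℝ)^k) := by
        rw [← hexpc]
        ring
    _ ≤ (N.choose j : ℝ) * (Real.exp 2 * (N:ℝ)^2) * ((j:ℝ)^j * (k:ℝ)^k) := by
        have hjNr : (j:ℝ) ≤ N := by exact_mod_cast hj
        have hkNr : (k:ℝ) ≤ N := by exact_mod_cast (by omega : k ≤ N)
        have hh : (j:ℝ)*k*Real.exp 2 ≤ Real.exp 2 * (N:ℝ)^2 := by
          have hjk2 : (j:ℝ)*k ≤ (N:ℝ)*N := mul_le_mul hjNr hkNr hkr.le (le_of_lt hNr)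
          nlinarith [Real.exp_pos 2, hjk2]
        gcongr

lemma hlog_nat : Tendsto (fun N : ℕ => Real.log N / N) atTop (nhds 0) :=
  (Real.isLittleO_log_id_atTop.tendsto_div_nhds_zero).comp tendsto_natCast_atTop_atTop


/-- the mean-field model with polynomial `g` has a thermodynamic limit. -/
theorem polynomial_g_limit (β : ℝ) (hβ : 0 < β) (n : ℕ) (a : ℕ → ℝ) :
    ∃ L : ℝ, Tendsto (fun N : ℕ =>
      (1 / (N : ℝ)) * Real.log (∑ σ : Fin N → Bool,
        Real.exp (β * N * ∑ k ∈ Finset.range (n + 1), a k * (mag N σ) ^ k)))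
      atTop (nhds L) := by
  classical
  set G : ℝ → ℝ := fun x => ∑ k ∈ Finset.range (n+1), a k * x^k with hG
  set F : ℝ → ℝ := fun x => β * G x + Real.binEntropy ((1+x)/2) with hF
  have hGcont : Continuous G := by
    apply continuous_finset_sum
    intro k _
    fun_prop
  have hFcont : Continuous F := by
    apply Continuous.add (continuous_const.mul hGcont)
    exact Real.binEntropy_continuous.comp (by fun_prop)
  obtain ⟨xs, hxs, hmax⟩ := isCompact_Icc.exists_isMaxOn (s := Set.Icc (-1:ℝ) 1)
    (Set.nonempty_Icc.2 (by norm_num)) hFcont.continuousOn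
  refine ⟨F xs, ?_⟩
  set A : ℕ → ℝ := fun N => (1 / (N : ℝ)) * Real.log (∑ σ : Fin N → Bool,
      Real.exp (β * N * ∑ k ∈ Finset.range (n + 1), a k * (mag N σ) ^ k)) with hA
  -- rewrite the partition function
  have hrew : ∀ N : ℕ, (∑ σ : Fin N → Bool,
      Real.exp (β * N * ∑ k ∈ Finset.range (n + 1), a k * (mag N σ) ^ k))
      = ∑ j ∈ Finset.range (N+1), (N.choose j : ℝ)
          * Real.exp (β * N * G ((2*(j:ℝ) - N)/N)) := by
    intro N
    have := sum_group N (fun S => Real.exp (β * N * G (S/N)))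
    simpa only [mag, hG] using this
  set S : ℕ → ℝ := fun N => ∑ j ∈ Finset.range (N+1), (N.choose j : ℝ)
      * Real.exp (β * N * G ((2*(j:ℝ) - N)/N)) with hS
  have hSpos : ∀ N : ℕ, 0 < S N := by
    intro N
    apply Finset.sum_pos
    · intro j hj
      have : (0:ℝ) < (N.choose j : ℝ) := by
        exact_mod_cast Nat.choose_pos (by simpa using Nat.lt_succ_iff.mp (Finset.mem_range.mp hj))
      positivity
    · exact ⟨0, Finset.mem_range.mpr (Nat.succ_pos N)⟩
  have hAS : ∀ N : ℕ, A N = (1/(N:ℝ)) * Real.log (S N) := by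
    intro N; rw [hA]; simp only; rw [hrew N]
  -- membership of magnetization values in [-1,1]
  have hmIcc : ∀ N : ℕ, 1 ≤ N → ∀ j : ℕ, j ≤ N → (2*(j:ℝ) - N)/N ∈ Set.Icc (-1:ℝ) 1 := by
    intro N hN j hj
    have hNr : (0:ℝ) < N := by exact_mod_cast hN
    have hjr : (j:ℝ) ≤ N := by exact_mod_cast hj
    have hj0 : (0:ℝ) ≤ j := Nat.cast_nonneg j
    constructor
    · rw [le_div_iff₀ hNr]; linarith
    · rw [div_le_iff₀ hNr]; linarith
  -- key entropy-argument identity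
  have hhalf : ∀ N : ℕ, 1 ≤ N → ∀ j : ℕ, (1 + (2*(j:ℝ) - N)/N)/2 = (j:ℝ)/N := by
    intro N hN j
    have hNr : (0:ℝ) < N := by exact_mod_cast hN
    field_simp
    ring
  -- upper bound
  have hup : ∀ N : ℕ, 1 ≤ N → A N ≤ F xs + Real.log ((N:ℝ)+1) / N := by
    intro N hN
    have hNr : (0:ℝ) < N := by exact_mod_cast hN
    have hterm : ∀ j ∈ Finset.range (N+1), (N.choose j : ℝ)
        * Real.exp (β * N * G ((2*(j:ℝ) - N)/N)) ≤ Real.exp ((N:ℝ) * F xs) := by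
      intro j hj
      have hjN : j ≤ N := Nat.lt_succ_iff.mp (Finset.mem_range.mp hj)
      set m : ℝ := (2*(j:ℝ) - N)/N with hm
      calc (N.choose j : ℝ) * Real.exp (β * N * G m)
          ≤ Real.exp ((N:ℝ) * Real.binEntropy ((j:ℝ)/N)) * Real.exp (β * N * G m) := by
            have := choose_le_exp N j hjN
            gcongr
        _ = Real.exp ((N:ℝ) * F m) := by
            rw [← Real.exp_add]
            congr 1
            rw [hF]
            simp only
            rw [hm, hhalf N hN j]
            ring
        _ ≤ Real.exp ((N:ℝ) * F xs) := by
            apply Real.exp_le_exp.mpr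
            apply mul_le_mul_of_nonneg_left _ hNr.le
            exact hmax (hmIcc N hN j hjN)
    have hsum : S N ≤ ((N:ℝ)+1) * Real.exp ((N:ℝ) * F xs) := by
      calc S N ≤ ∑ _j ∈ Finset.range (N+1), Real.exp ((N:ℝ) * F xs) :=
            Finset.sum_le_sum hterm
        _ = ((N:ℝ)+1) * Real.exp ((N:ℝ) * F xs) := by
            rw [Finset.sum_const, Finset.card_range]
            push_cast; ring
    have hlogle : Real.log (S N) ≤ Real.log ((N:ℝ)+1) + (N:ℝ) * F xs := by
      calc Real.log (S N) ≤ Real.log (((N:ℝ)+1) * Real.exp ((N:ℝ) * F xs)) :=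
            Real.log_le_log (hSpos N) hsum
        _ = Real.log ((N:ℝ)+1) + (N:ℝ) * F xs := by
            rw [Real.log_mul (by positivity) (Real.exp_ne_zero _), Real.log_exp]
    rw [hAS N]
    calc (1/(N:ℝ)) * Real.log (S N) ≤ (1/(N:ℝ)) * (Real.log ((N:ℝ)+1) + (N:ℝ) * F xs) := by
          apply mul_le_mul_of_nonneg_left hlogle (by positivity)
      _ = F xs + Real.log ((N:ℝ)+1) / N := by field_simp; ring
  -- the approximating magnetization
  set jf : ℕ → ℕ := fun N => ⌊(N:ℝ)*(1+xs)/2⌋₊ with hjf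
  set mm : ℕ → ℝ := fun N => (2*((jf N):ℝ) - N)/N with hmm
  have hxs1 : -1 ≤ xs := hxs.1
  have hxs2 : xs ≤ 1 := hxs.2
  have hjfle : ∀ N : ℕ, jf N ≤ N := by
    intro N
    rw [hjf]
    simp only
    have h1 : (N:ℝ)*(1+xs)/2 ≤ (N:ℝ) := by nlinarith [(Nat.cast_nonneg N : (0:ℝ) ≤ (N:ℝ))]
    calc ⌊(N:ℝ)*(1+xs)/2⌋₊ ≤ ⌊(N:ℝ)⌋₊ := Nat.floor_le_floor h1
      _ = N := Nat.floor_natCast N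
  have hmm_bounds : ∀ N : ℕ, 1 ≤ N → xs - 2/(N:ℝ) ≤ mm N ∧ mm N ≤ xs := by
    intro N hN
    have hNr : (0:ℝ) < N := by exact_mod_cast hN
    have harg0 : (0:ℝ) ≤ (N:ℝ)*(1+xs)/2 := by nlinarith
    have hfl1 : ((jf N):ℝ) ≤ (N:ℝ)*(1+xs)/2 := Nat.floor_le harg0
    have hfl2 : (N:ℝ)*(1+xs)/2 < (jf N) + 1 := Nat.lt_floor_add_one _
    constructor
    · rw [hmm]; simp only
      rw [le_div_iff₀ hNr]
      have : (xs - 2/(N:ℝ)) * N = xs * N - 2 := by field_simp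
      rw [this]
      nlinarith
    · rw [hmm]; simp only
      rw [div_le_iff₀ hNr]
      nlinarith
  have hmm_tendsto : Tendsto mm atTop (nhds xs) := by
    apply tendsto_of_tendsto_of_tendsto_of_le_of_le'
      (g := fun N : ℕ => xs - 2/(N:ℝ)) (h := fun _ : ℕ => xs)
    · have := (tendsto_const_div_atTop_nhds_zero_nat (2:ℝ))
      have h2 := tendsto_const_nhds (x := xs) (f := atTop (α := ℕ))
      have := h2.sub this
      simpa using this
    · exact tendsto_const_nhds
    · filter_upwards [eventually_ge_atTop 1] with N hN using (hmm_bounds N hN).1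
    · filter_upwards [eventually_ge_atTop 1] with N hN using (hmm_bounds N hN).2
  -- lower bound
  have hlo : ∀ N : ℕ, 1 ≤ N → F (mm N) - (2/(N:ℝ) + 2 * Real.log N / N) ≤ A N := by
    intro N hN
    have hNr : (0:ℝ) < N := by exact_mod_cast hN
    have hC := exp_le_choose N (jf N) hN (hjfle N)
    have hEN2 : (0:ℝ) < Real.exp 2 * (N:ℝ)^2 := by positivity
    have hterm : Real.exp ((N:ℝ) * F (mm N)) / (Real.exp 2 * (N:ℝ)^2) ≤ S N := by
      have h1 : Real.exp ((N:ℝ) * Real.binEntropy (((jf N):ℝ)/N)) / (Real.exp 2 * (N:ℝ)^2)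
          ≤ (N.choose (jf N) : ℝ) := by
        rw [div_le_iff₀ hEN2]; exact hC
      have h2 : Real.exp ((N:ℝ) * F (mm N))
          = Real.exp ((N:ℝ) * Real.binEntropy (((jf N):ℝ)/N)) * Real.exp (β * N * G (mm N)) := by
        rw [← Real.exp_add]
        congr 1
        rw [hF]; simp only
        rw [hmm]; simp only
        rw [hhalf N hN (jf N)]
        ring
      calc Real.exp ((N:ℝ) * F (mm N)) / (Real.exp 2 * (N:ℝ)^2)
          = (Real.exp ((N:ℝ) * Real.binEntropy (((jf N):ℝ)/N)) / (Real.exp 2 * (N:ℝ)^2))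
              * Real.exp (β * N * G (mm N)) := by rw [h2]; ring
        _ ≤ (N.choose (jf N) : ℝ) * Real.exp (β * N * G (mm N)) := by gcongr
        _ ≤ S N := by
            apply Finset.single_le_sum (f := fun j => (N.choose j : ℝ)
              * Real.exp (β * N * G ((2*(j:ℝ) - N)/N)))
            · intro j _; positivity
            · exact Finset.mem_range.mpr (Nat.lt_succ_of_le (hjfle N))
    have hlogge : (N:ℝ) * F (mm N) - (2 + 2 * Real.log N) ≤ Real.log (S N) := by
      have := Real.log_le_log (by positivity) hterm
      rw [Real.log_div (Real.exp_ne_zero _) (by positivity), Real.log_exp] at this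
      have hl2 : Real.log (Real.exp 2 * (N:ℝ)^2) = 2 + 2 * Real.log N := by
        rw [Real.log_mul (Real.exp_ne_zero _) (by positivity), Real.log_exp, Real.log_pow]
        push_cast; ring
      linarith [hl2 ▸ this]
    rw [hAS N]
    have := mul_le_mul_of_nonneg_left hlogge (by positivity : (0:ℝ) ≤ 1/(N:ℝ))
    calc F (mm N) - (2/(N:ℝ) + 2 * Real.log N / N)
        = (1/(N:ℝ)) * ((N:ℝ) * F (mm N) - (2 + 2 * Real.log N)) := by field_simp
      _ ≤ (1/(N:ℝ)) * Real.log (S N) := this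
  -- squeeze
  apply tendsto_of_tendsto_of_tendsto_of_le_of_le'
    (g := fun N : ℕ => F (mm N) - (2/(N:ℝ) + 2 * Real.log N / N))
    (h := fun N : ℕ => F xs + (Real.log 2 / N + Real.log N / N))
  · have h1 : Tendsto (fun N : ℕ => F (mm N)) atTop (nhds (F xs)) :=
      (hFcont.continuousAt.tendsto).comp hmm_tendsto
    have h2 : Tendsto (fun N : ℕ => 2/(N:ℝ) + 2 * Real.log N / N) atTop (nhds 0) := by
      have ha := tendsto_const_div_atTop_nhds_zero_nat (2:ℝ)
      have hb := hlog_nat.const_mul 2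
      have := ha.add hb
      simpa [mul_div_assoc] using this
    simpa using h1.sub h2
  · have ha := tendsto_const_div_atTop_nhds_zero_nat (Real.log 2)
    have := (tendsto_const_nhds (x := F xs) (f := atTop (α := ℕ))).add (ha.add hlog_nat)
    simpa using this
  · filter_upwards [eventually_ge_atTop 1] with N hN using hlo N hN
  · filter_upwards [eventually_ge_atTop 1] with N hN
    have hNr : (0:ℝ) < N := by exact_mod_cast hN
    have h1 : Real.log ((N:ℝ)+1) ≤ Real.log 2 + Real.log N := by
      rw [← Real.log_mul (by norm_num) hNr.ne']
      apply Real.log_le_log (by positivity)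
      have : (1:ℝ) ≤ N := by exact_mod_cast hN
      linarith
    have := hup N hN
    have h2 : Real.log ((N:ℝ)+1) / N ≤ Real.log 2 / N + Real.log N / N := by
      rw [← add_div]
      gcongr
    linarith
end

section
/- For the random field Curie–Weiss model with Hamiltonian H_N(h,σ) = -(1/N)∑_{i,j=1}^N σ_iσ_j + ∑_{i=1}^N h_iσ_i with h_i ∈ {-1,1}, writing m_N^±(σ,h) = (1/N)∑_i ((1±h_i)/2)σ_i, one has H_N = -N[(m_N^+ + m_N^-)² − (m_N^+ − m_N^-)], and for every fixed realization h the free energy densities satisfy N α_N(h) ≤ N_1 α_{N_1}(h) + N_2 α_{N_2}(h) for every decomposition N = N_1 + N_2. -/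
open Finset

/-- Random field Curie–Weiss Hamiltonian with field `η`. -/
noncomputable def hamRF (M : ℕ) (η σ : Fin M → Bool) : ℝ :=
  -(1 / (M : ℝ)) * (∑ i, ∑ j, spin (σ i) * spin (σ j)) + ∑ i, spin (η i) * spin (σ i)

noncomputable def magPlus (M : ℕ) (η σ : Fin M → Bool) : ℝ :=
  (1 / (M : ℝ)) * ∑ i, ((1 + spin (η i)) / 2) * spin (σ i)

noncomputable def magMinus (M : ℕ) (η σ : Fin M → Bool) : ℝ :=
  (1 / (M : ℝ)) * ∑ i, ((1 - spin (η i)) / 2) * spin (σ i)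

noncomputable def alphaRF (β : ℝ) (M : ℕ) (η : Fin M → Bool) : ℝ :=
  (1 / (M : ℝ)) * Real.log (∑ σ : Fin M → Bool, Real.exp (-β * hamRF M η σ))

lemma hamRF_eq (M : ℕ) (η σ : Fin M → Bool) :
    hamRF M η σ = -(1 / (M : ℝ)) * (∑ i, spin (σ i)) ^ 2 + ∑ i, spin (η i) * spin (σ i) := by
  unfold hamRF
  rw [sq, Finset.sum_mul_sum]

lemma sq_div_ineq (a b m n : ℝ) (hm : 0 < m) (hn : 0 < n) :
    (a + b) ^ 2 / (m + n) ≤ a ^ 2 / m + b ^ 2 / n := by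
  rw [div_add_div _ _ (ne_of_gt hm) (ne_of_gt hn),
    div_le_div_iff₀ (by linarith) (by positivity)]
  nlinarith [sq_nonneg (a * n - b * m)]

noncomputable def glueEquiv (N₁ N₂ : ℕ) :
    (Fin N₁ → Bool) × (Fin N₂ → Bool) ≃ (Fin (N₁ + N₂) → Bool) :=
  (Equiv.sumArrowEquivProdArrow (Fin N₁) (Fin N₂) Bool).symm.trans
    (Equiv.arrowCongr finSumFinEquiv (Equiv.refl Bool))

lemma glueEquiv_castAdd (N₁ N₂ : ℕ) (σ₁ : Fin N₁ → Bool) (σ₂ : Fin N₂ → Bool) (i : Fin N₁) :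
    glueEquiv N₁ N₂ (σ₁, σ₂) (Fin.castAdd N₂ i) = σ₁ i := by
  simp [glueEquiv, Equiv.sumArrowEquivProdArrow, Equiv.arrowCongr]

lemma glueEquiv_natAdd (N₁ N₂ : ℕ) (σ₁ : Fin N₁ → Bool) (σ₂ : Fin N₂ → Bool) (i : Fin N₂) :
    glueEquiv N₁ N₂ (σ₁, σ₂) (Fin.natAdd N₁ i) = σ₂ i := by
  simp [glueEquiv, Equiv.sumArrowEquivProdArrow, Equiv.arrowCongr]

/-- the random field Curie–Weiss Hamiltonian is a convex mean-field function of
`(m⁺, m⁻)`, and the free energy is subadditive pointwise in the field realization. -/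
theorem random_field_cw (β : ℝ) (hβ : 0 < β) (N₁ N₂ : ℕ) (h1 : 1 ≤ N₁) (h2 : 1 ≤ N₂)
    (η : Fin (N₁ + N₂) → Bool) :
    (∀ σ : Fin (N₁ + N₂) → Bool,
      hamRF (N₁ + N₂) η σ = -((N₁ + N₂ : ℝ)) *
        ((magPlus (N₁ + N₂) η σ + magMinus (N₁ + N₂) η σ) ^ 2
          - (magPlus (N₁ + N₂) η σ - magMinus (N₁ + N₂) η σ))) ∧
    ((N₁ + N₂ : ℝ)) * alphaRF β (N₁ + N₂) η ≤
      (N₁ : ℝ) * alphaRF β N₁ (fun i => η (Fin.castAdd N₂ i))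
      + (N₂ : ℝ) * alphaRF β N₂ (fun i => η (Fin.natAdd N₁ i)) := by
  have hN1 : (0:ℝ) < N₁ := by exact_mod_cast h1
  have hN2 : (0:ℝ) < N₂ := by exact_mod_cast h2
  have hNpos : (0:ℝ) < ((N₁ + N₂ : ℕ) : ℝ) := by push_cast; linarith
  constructor
  · intro σ
    rw [hamRF_eq]
    unfold magPlus magMinus
    have hsum : ∑ i, ((1 + spin (η i)) / 2) * spin (σ i)
        + ∑ i, ((1 - spin (η i)) / 2) * spin (σ i) = ∑ i, spin (σ i) := by
      rw [← Finset.sum_add_distrib]; apply Finset.sum_congr rfl; intro i _; ring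
    have hdiff : ∑ i, ((1 + spin (η i)) / 2) * spin (σ i)
        - ∑ i, ((1 - spin (η i)) / 2) * spin (σ i) = ∑ i, spin (η i) * spin (σ i) := by
      rw [← Finset.sum_sub_distrib]; apply Finset.sum_congr rfl; intro i _; ring
    rw [← mul_add, ← mul_sub, hsum, hdiff]
    field_simp
    push_cast; ring
  · -- subadditivity
    set η₁ : Fin N₁ → Bool := fun i => η (Fin.castAdd N₂ i) with hη₁
    set η₂ : Fin N₂ → Bool := fun i => η (Fin.natAdd N₁ i) with hη₂
    set Z : ℝ := ∑ σ : Fin (N₁ + N₂) → Bool, Real.exp (-β * hamRF (N₁ + N₂) η σ) with hZ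
    set Z₁ : ℝ := ∑ σ : Fin N₁ → Bool, Real.exp (-β * hamRF N₁ η₁ σ) with hZ1
    set Z₂ : ℝ := ∑ σ : Fin N₂ → Bool, Real.exp (-β * hamRF N₂ η₂ σ) with hZ2
    have hZpos : 0 < Z := Finset.sum_pos (fun _ _ => Real.exp_pos _) univ_nonempty
    have hZ1pos : 0 < Z₁ := Finset.sum_pos (fun _ _ => Real.exp_pos _) univ_nonempty
    have hZ2pos : 0 < Z₂ := Finset.sum_pos (fun _ _ => Real.exp_pos _) univ_nonempty
    have key : Z ≤ Z₁ * Z₂ := by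
      set e := glueEquiv N₁ N₂ with he
      have hZ' : Z = ∑ p : (Fin N₁ → Bool) × (Fin N₂ → Bool),
          Real.exp (-β * hamRF (N₁ + N₂) η (e p)) := by
        rw [hZ]
        exact (Fintype.sum_equiv e _ _ (fun p => rfl)).symm
      rw [hZ', hZ1, hZ2, Finset.sum_mul_sum, ← Fintype.sum_prod_type']
      apply Finset.sum_le_sum
      intro p _
      obtain ⟨σ₁, σ₂⟩ := p
      have hep1 : ∀ i : Fin N₁, e (σ₁, σ₂) (Fin.castAdd N₂ i) = σ₁ i := by
        intro i; rw [he]; exact glueEquiv_castAdd N₁ N₂ σ₁ σ₂ i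
      have hep2 : ∀ i : Fin N₂, e (σ₁, σ₂) (Fin.natAdd N₁ i) = σ₂ i := by
        intro i; rw [he]; exact glueEquiv_natAdd N₁ N₂ σ₁ σ₂ i
      rw [← Real.exp_add, Real.exp_le_exp]
      have hham : hamRF N₁ η₁ σ₁ + hamRF N₂ η₂ σ₂ ≤ hamRF (N₁ + N₂) η (e (σ₁, σ₂)) := by
        rw [hamRF_eq, hamRF_eq, hamRF_eq]
        have hs : ∑ i, spin (e (σ₁, σ₂) i) =
            (∑ i, spin (σ₁ i)) + (∑ i, spin (σ₂ i)) := by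
          rw [Fin.sum_univ_add]
          congr 1 <;> (apply Finset.sum_congr rfl; intro i _)
          · rw [hep1]
          · rw [hep2]
        have hf : ∑ i, spin (η i) * spin (e (σ₁, σ₂) i) =
            (∑ i, spin (η₁ i) * spin (σ₁ i)) + (∑ i, spin (η₂ i) * spin (σ₂ i)) := by
          rw [Fin.sum_univ_add]
          congr 1 <;> (apply Finset.sum_congr rfl; intro i _)
          · rw [hep1]
          · rw [hep2]
        rw [hs, hf]
        set a := ∑ i, spin (σ₁ i)
        set b := ∑ i, spin (σ₂ i)
        have hq : (a + b) ^ 2 / ((N₁:ℝ) + N₂) ≤ a ^ 2 / N₁ + b ^ 2 / N₂ :=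
          sq_div_ineq a b (N₁:ℝ) (N₂:ℝ) hN1 hN2
        have hle : -(1 / ((N₁ + N₂ : ℕ):ℝ)) * (a + b) ^ 2 ≥
            -(1 / (N₁:ℝ)) * a ^ 2 + -(1 / (N₂:ℝ)) * b ^ 2 := by
          push_cast
          have hprod : (0:ℝ) < (N₁:ℝ) * N₂ := mul_pos hN1 hN2
          rw [div_add_div _ _ (ne_of_gt hN1) (ne_of_gt hN2),
            div_le_div_iff₀ (by linarith) hprod] at hq
          rw [ge_iff_le, neg_mul, neg_mul, neg_mul, ← neg_add, neg_le_neg_iff,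
            div_mul_eq_mul_div, div_mul_eq_mul_div, div_mul_eq_mul_div, one_mul, one_mul,
            one_mul, div_add_div _ _ (ne_of_gt hN1) (ne_of_gt hN2),
            div_le_div_iff₀ (by linarith) hprod]
          nlinarith
        linarith
      nlinarith [hham]
    have hlog : Real.log Z ≤ Real.log Z₁ + Real.log Z₂ := by
      rw [← Real.log_mul (ne_of_gt hZ1pos) (ne_of_gt hZ2pos)]
      exact Real.log_le_log hZpos key
    unfold alphaRF
    rw [← hZ, ← hZ1, ← hZ2]
    have e1 : ((N₁:ℝ) + N₂) * ((1 / ((N₁ + N₂ : ℕ):ℝ)) * Real.log Z) = Real.log Z := by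
      push_cast; field_simp
    have e2 : (N₁:ℝ) * ((1 / (N₁:ℝ)) * Real.log Z₁) = Real.log Z₁ := by field_simp
    have e3 : (N₂:ℝ) * ((1 / (N₂:ℝ)) * Real.log Z₂) = Real.log Z₂ := by field_simp
    rw [e1, e2, e3]
    exact hlog
end
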